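/- The set of partitions of n, ordered by the opposite dominance order (λ ≤ μ iff for all i, the sum of the first i parts of λ is at least the sum of the first i parts of μ), forms a lattice. -/

import Mathlib

/-- `psum l i` is the sum of the first `i` parts of `l`. -/
def psum (l : List ℕ) (i : ℕ) : ℕ := (l.take i).sum

/-- A partition of `n`: a non-increasing list of positive integers summing to `n`. -/
structure ListPartition (n : ℕ) where
  parts : List ℕ
  sorted : parts.Pairwise (· ≥ ·)
  pos : ∀ p ∈ parts, 0 < p
  sum_eq : parts.sum = n

/-- The opposite dominance order: `a ≤ b` iff all partial sums of `a` are at least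
those of `b`. -/
def oppLe {n : ℕ} (a b : ListPartition n) : Prop := ∀ i, psum b.parts i ≤ psum a.parts i

namespace OppDom

lemma psum_zero (l : List ℕ) : psum l 0 = 0 := rfl

lemma psum_nil (i : ℕ) : psum [] i = 0 := by simp [psum]

lemma psum_succ (l : List ℕ) (i : ℕ) : psum l (i+1) = psum l i + l.getD i 0 := by
  rcases lt_or_ge i l.length with h | h
  · rw [psum, psum, List.take_succ, List.sum_append, List.getD_eq_getElem _ _ h]
    simp [List.getElem?_eq_getElem h]
  · rw [psum, psum, List.take_of_length_le h, List.take_of_length_le (h.trans (Nat.le_succ i)),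
      List.getD_eq_default _ _ h, add_zero]

lemma psum_mono (l : List ℕ) : Monotone (psum l) :=
  monotone_nat_of_le_succ fun i => by rw [psum_succ]; omega

lemma psum_cons (x : ℕ) (xs : List ℕ) (i : ℕ) : psum (x :: xs) (i+1) = x + psum xs i := by
  simp [psum, List.take_succ_cons]

lemma psum_of_length_le (l : List ℕ) {i : ℕ} (h : l.length ≤ i) : psum l i = l.sum := by
  rw [psum, List.take_of_length_le h]

lemma psum_le_sum (l : List ℕ) (i : ℕ) : psum l i ≤ l.sum := by
  conv_rhs => rw [← List.take_append_drop i l]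
  rw [List.sum_append]; exact Nat.le_add_right _ _

lemma getD_anti {l : List ℕ} (h : l.Pairwise (· ≥ ·)) {i j : ℕ} (hij : i ≤ j) :
    l.getD j 0 ≤ l.getD i 0 := by
  rcases lt_or_ge j l.length with hj | hj
  · have hi : i < l.length := lt_of_le_of_lt hij hj
    rw [List.getD_eq_getElem _ _ hj, List.getD_eq_getElem _ _ hi]
    rcases eq_or_lt_of_le hij with rfl | hij
    · exact le_refl _
    · exact List.pairwise_iff_getElem.mp h i j hi hj hij
  · rw [List.getD_eq_default _ _ hj]; exact Nat.zero_le _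

/-- Concavity of partial sums of a sorted list. -/
lemma psum_concave {l : List ℕ} (h : l.Pairwise (· ≥ ·)) (i : ℕ) :
    psum l i + psum l (i+2) ≤ 2 * psum l (i+1) := by
  have h1 := psum_succ l i
  have h2 := psum_succ l (i+1)
  rw [show i+1+1 = i+2 from rfl] at h2
  have h3 := getD_anti h (show i ≤ i + 1 by omega)
  omega

lemma eq_of_psum : ∀ (l₁ l₂ : List ℕ), (∀ x ∈ l₁, 0 < x) → (∀ x ∈ l₂, 0 < x) →
    (∀ i, psum l₁ i = psum l₂ i) → l₁ = l₂ := by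
  intro l₁
  induction l₁ with
  | nil =>
    intro l₂ _ h₂ h
    cases l₂ with
    | nil => rfl
    | cons y ys =>
      exfalso
      have h1 := h 1
      rw [psum_cons, psum_nil, psum_zero] at h1
      have := h₂ y (by simp)
      omega
  | cons x xs ih =>
    intro l₂ h₁ h₂ h
    cases l₂ with
    | nil =>
      exfalso
      have h1 := h 1
      rw [psum_cons, psum_nil, psum_zero] at h1
      have := h₁ x (by simp)
      omega
    | cons y ys =>
      have hxy : x = y := by
        have h1 := h 1
        rw [psum_cons, psum_cons] at h1
        simp only [psum_zero] at h1
        omega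
      subst hxy
      have : xs = ys := by
        apply ih ys (fun p hp => h₁ p (by simp [hp])) (fun p hp => h₂ p (by simp [hp]))
        intro i
        have h1 := h (i+1)
        rw [psum_cons, psum_cons] at h1
        omega
      rw [this]

lemma filter_pos_decomp : ∀ (l : List ℕ), l.Pairwise (· ≥ ·) →
    ∃ m, l = l.filter (fun x => 0 < x) ++ List.replicate m 0 := by
  intro l
  induction l with
  | nil => exact fun _ => ⟨0, rfl⟩
  | cons x xs ih =>
    intro h
    rcases Nat.eq_zero_or_pos x with hx | hx
    · refine ⟨(x :: xs).length, ?_⟩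
      have hall : ∀ y ∈ x :: xs, y = 0 := by
        intro y hy
        rcases List.mem_cons.mp hy with rfl | hy
        · exact hx
        · have := List.rel_of_pairwise_cons h hy
          omega
      have hfilt : (x :: xs).filter (fun x => 0 < x) = [] := by
        rw [List.filter_eq_nil_iff]
        intro y hy
        simp [hall y hy]
      rw [hfilt, List.nil_append]
      exact List.eq_replicate_of_mem hall
    · obtain ⟨m, hm⟩ := ih h.of_cons
      refine ⟨m, ?_⟩
      rw [List.filter_cons_of_pos (by simpa using hx), List.cons_append, ← hm]

section Join

variable {n : ℕ} (a b : ListPartition n)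

/-- pointwise min of the partial-sum functions -/
def F (i : ℕ) : ℕ := min (psum a.parts i) (psum b.parts i)

def D (i : ℕ) : ℕ := F a b (i+1) - F a b i

def Lmax : ℕ := max a.parts.length b.parts.length

def c0 : List ℕ := (List.range (Lmax a b)).map (D a b)

lemma F_mono : Monotone (F a b) :=
  monotone_nat_of_le_succ fun i =>
    le_min ((min_le_left _ _).trans (psum_mono _ (Nat.le_succ i)))
      ((min_le_right _ _).trans (psum_mono _ (Nat.le_succ i)))

lemma F_zero : F a b 0 = 0 := by simp [F, psum_zero]

lemma F_succ (i : ℕ) : F a b (i+1) = F a b i + D a b i :=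
  (Nat.add_sub_cancel' (F_mono a b (Nat.le_succ i))).symm

lemma F_concave (i : ℕ) : F a b i + F a b (i+2) ≤ 2 * F a b (i+1) := by
  rcases min_cases (psum a.parts (i+1)) (psum b.parts (i+1)) with ⟨h, _⟩ | ⟨h, _⟩
  · calc F a b i + F a b (i+2) ≤ psum a.parts i + psum a.parts (i+2) :=
          Nat.add_le_add (min_le_left _ _) (min_le_left _ _)
      _ ≤ 2 * psum a.parts (i+1) := psum_concave a.sorted i
      _ = 2 * F a b (i+1) := by rw [F, h]
  · calc F a b i + F a b (i+2) ≤ psum b.parts i + psum b.parts (i+2) :=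
          Nat.add_le_add (min_le_right _ _) (min_le_right _ _)
      _ ≤ 2 * psum b.parts (i+1) := psum_concave b.sorted i
      _ = 2 * F a b (i+1) := by rw [F, h]

lemma D_anti : Antitone (D a b) := by
  apply antitone_nat_of_succ_le
  intro i
  have h1 := F_succ a b i
  have h2 := F_succ a b (i+1)
  rw [show i+1+1 = i+2 from rfl] at h2
  have h3 := F_concave a b i
  omega

lemma F_of_le {i : ℕ} (h : Lmax a b ≤ i) : F a b i = n := by
  rw [F, psum_of_length_le _ ((le_max_left _ _).trans h),
    psum_of_length_le _ ((le_max_right _ _).trans h), a.sum_eq, b.sum_eq, min_self]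

lemma c0_sorted : (c0 a b).Pairwise (· ≥ ·) := by
  rw [c0, List.pairwise_map]
  exact (List.pairwise_lt_range (n := _)).imp fun {i j} hij => D_anti a b hij.le

lemma sum_range_map_D (i : ℕ) : ((List.range i).map (D a b)).sum = F a b i := by
  induction i with
  | zero => simp [F_zero]
  | succ i ih =>
    rw [List.range_succ, List.map_append, List.sum_append, ih]
    simp only [List.map_cons, List.map_nil, List.sum_cons, List.sum_nil, add_zero]
    exact (F_succ a b i).symm

lemma c0_length : (c0 a b).length = Lmax a b := by simp [c0]

lemma c0_sum : (c0 a b).sum = n := by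
  rw [c0, sum_range_map_D, F_of_le a b le_rfl]

lemma psum_c0 (i : ℕ) : psum (c0 a b) i = F a b i := by
  rcases le_or_gt i (Lmax a b) with h | h
  · rw [psum, c0, ← List.map_take, List.take_range, Nat.min_eq_left h, sum_range_map_D]
  · rw [psum_of_length_le _ (by rw [c0_length]; omega), c0_sum, F_of_le a b h.le]

/-- The join of two partitions in the opposite dominance order. -/
def join : ListPartition n where
  parts := (c0 a b).filter (fun x => 0 < x)
  sorted := (c0_sorted a b).filter _
  pos := by
    intro p hp
    have := List.of_mem_filter hp
    simpa using this
  sum_eq := by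
    obtain ⟨m, hm⟩ := filter_pos_decomp (c0 a b) (c0_sorted a b)
    have := c0_sum a b
    rw [hm, List.sum_append, List.sum_replicate, smul_zero, add_zero] at this
    exact this

lemma psum_join (i : ℕ) : psum (join a b).parts i = F a b i := by
  obtain ⟨m, hm⟩ := filter_pos_decomp (c0 a b) (c0_sorted a b)
  have : psum (c0 a b) i = psum (join a b).parts i := by
    rw [psum, psum]
    conv_lhs => rw [hm]
    rw [List.take_append, List.sum_append, List.take_replicate,
      List.sum_replicate, smul_zero, add_zero]
    rfl
  rw [← this, psum_c0]

end Join

section Order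

variable {n : ℕ}

lemma Partition.ext' {a b : ListPartition n} (h : a.parts = b.parts) : a = b := by
  cases a; cases b; simpa using h

/-- Map to mathlib's (multiset-based) partitions, to obtain finiteness. -/
def toNatPartition (p : ListPartition n) : n.Partition :=
  ⟨(p.parts : Multiset ℕ), fun hi => p.pos _ (by simpa using hi), by simpa using p.sum_eq⟩

lemma toNatPartition_injective : Function.Injective (toNatPartition (n := n)) := by
  intro a b h
  apply Partition.ext'
  have h2 : (a.parts : Multiset ℕ) = (b.parts : Multiset ℕ) :=
    congrArg Nat.Partition.parts h
  exact List.Perm.eq_of_pairwise' a.sorted b.sorted (Multiset.coe_eq_coe.mp h2)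

noncomputable instance : Fintype (ListPartition n) :=
  Fintype.ofInjective _ toNatPartition_injective

/-- The opposite dominance partial order. -/
def instPO : PartialOrder (ListPartition n) where
  le := oppLe
  le_refl a i := le_refl _
  le_trans a b c hab hbc i := (hbc i).trans (hab i)
  le_antisymm a b hab hba :=
    Partition.ext' (eq_of_psum _ _ a.pos b.pos fun i => le_antisymm (hba i) (hab i))

/-- The opposite dominance order with joins. -/
def instSS : SemilatticeSup (ListPartition n) :=
  { instPO with
    sup := join
    le_sup_left := fun a b i => by rw [psum_join]; exact min_le_left _ _
    le_sup_right := fun a b i => by rw [psum_join]; exact min_le_right _ _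
    sup_le := fun a b c hac hbc i => by rw [psum_join]; exact le_min (hac i) (hbc i) }

/-- The bottom partition: the single part `n` (or empty for `n = 0`). -/
def botP (n : ℕ) : ListPartition n where
  parts := if n = 0 then [] else [n]
  sorted := by split <;> simp
  pos := by
    intro p hp
    split at hp
    · simp at hp
    · simp at hp
      omega
  sum_eq := by split <;> simp <;> omega

lemma botP_le (x : ListPartition n) : oppLe (botP n) x := by
  intro i
  cases i with
  | zero => simp [psum_zero]
  | succ i =>
    have hx : psum x.parts (i+1) ≤ n := by
      calc psum x.parts (i+1) ≤ x.parts.sum := psum_le_sum _ _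
        _ = n := x.sum_eq
    have hb : psum (botP n).parts (i+1) = n := by
      unfold botP
      split
      · rename_i h; rw [psum_nil]; omega
      · rw [psum_of_length_le] <;> simp
    omega

/-- The opposite dominance lattice: meets come from finiteness, as the join of
all lower bounds (the bottom partition being a lower bound). -/
noncomputable def instLattice : Lattice (ListPartition n) := by
  classical
  letI P := instPO (n := n)
  letI S := instSS (n := n)
  have hmem : ∀ a b : ListPartition n,
      botP n ∈ Finset.univ.filter (fun c : ListPartition n => c ≤ a ∧ c ≤ b) := by
    intro a b
    simp only [Finset.mem_filter, Finset.mem_univ, true_and]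
    exact ⟨botP_le a, botP_le b⟩
  exact
  { S with
    inf := fun a b =>
      (Finset.univ.filter (fun c : ListPartition n => c ≤ a ∧ c ≤ b)).sup' ⟨_, hmem a b⟩ id
    inf_le_left := fun a b => by
      apply Finset.sup'_le
      intro c hc
      exact ((Finset.mem_filter.mp hc).2).1
    inf_le_right := fun a b => by
      apply Finset.sup'_le
      intro c hc
      exact ((Finset.mem_filter.mp hc).2).2
    le_inf := fun c a b hca hcb =>
      Finset.le_sup' (f := id)
        (Finset.mem_filter.mpr ⟨Finset.mem_univ _, hca, hcb⟩) }

end Order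

end OppDom

/-- The set of partitions of `n`, ordered by the opposite dominance order, forms a
lattice. -/
theorem partitions_oppDominance_lattice (n : ℕ) :
    ∃ L : Lattice (ListPartition n), ∀ a b : ListPartition n,
      (letI := L; a ≤ b) ↔ oppLe a b :=
  ⟨OppDom.instLattice, fun _ _ => Iff.rfl⟩
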